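/- arXiv:1904.12598 — 2 statements merged into one kernel-verified Lean document; each statement's English description precedes it below -/
import Mathlib

section
/- Let X be a reflexive Banach space with a suppression 1-unconditional Schauder basis (e_j)_{j=1}^∞ that is λ-asymptotic c₀, i.e., for every normalized block basis (x_j)_{j=1}^∞ of (e_j) and every n ∈ ℕ there exist indices j_1 < ... < j_n with max_{1≤i≤n}|a_i| ≤ ‖Σ_{i=1}^n a_i x_{j_i}‖ ≤ λ · max_{1≤i≤n}|a_i| for all scalars a_1, ..., a_n. Then K(X) ≤ λ, where K(X) := sup{σ ≥ 0 : the closed unit ball of X contains a sequence (x_n) with ‖x_n − x_m‖ ≥ σ for all n ≠ m}. -/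
open Filter Topology

/-- The Kottman constant `K(X)`. -/
noncomputable def kottmanConst (X : Type*) [NormedAddCommGroup X] [NormedSpace ℝ X] : ℝ :=
  sSup {σ : ℝ | 0 ≤ σ ∧ ∃ x : ℕ → X, (∀ n, ‖x n‖ ≤ 1) ∧
    ∀ n m : ℕ, n ≠ m → σ ≤ ‖x n - x m‖}

/-- `e` is a Schauder basis of `X`: every `x ∈ X` has a unique expansion
`x = Σ_{j} a j • e j` with norm-convergent partial sums. -/
def IsSchauderBasis {X : Type*} [NormedAddCommGroup X] [NormedSpace ℝ X] (e : ℕ → X) : Prop :=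
  ∀ x : X, ∃! a : ℕ → ℝ,
    Tendsto (fun N => ∑ j ∈ Finset.range N, a j • e j) atTop (nhds x)

/-- `e` is suppression `1`-unconditional: deleting coefficients from a finitely supported
linear combination never increases the norm. -/
def SuppressionOneUnconditional {X : Type*} [NormedAddCommGroup X] [NormedSpace ℝ X]
    (e : ℕ → X) : Prop :=
  ∀ (α : ℕ →₀ ℝ) (A : Finset ℕ),
    ‖∑ j ∈ A, α j • e j‖ ≤ ‖∑ j ∈ α.support, α j • e j‖

/-- `x` is a normalised block basis of `e`. -/
def IsNormalizedBlockBasis {X : Type*} [NormedAddCommGroup X] [NormedSpace ℝ X]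
    (e x : ℕ → X) : Prop :=
  ∃ (F : ℕ → Finset ℕ) (a : ℕ → ℝ),
    (∀ j, (F j).Nonempty) ∧
    (∀ j, ∀ i ∈ F j, ∀ i' ∈ F (j + 1), i < i') ∧
    (∀ j, x j = ∑ i ∈ F j, a i • e i) ∧
    (∀ j, ‖x j‖ = 1)

/-- The basis `e` is `λ`-asymptotic `c₀`. -/
def IsAsymptoticC0 {X : Type*} [NormedAddCommGroup X] [NormedSpace ℝ X]
    (e : ℕ → X) (lam : ℝ) : Prop :=
  ∀ x : ℕ → X, IsNormalizedBlockBasis e x →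
    ∀ n : ℕ, ∃ j : Fin n → ℕ, StrictMono j ∧
      ∀ a : Fin n → ℝ,
        (∀ i, |a i| ≤ ‖∑ i, a i • x (j i)‖) ∧
        ‖∑ i, a i • x (j i)‖ ≤ lam * ⨆ i, |a i|

namespace SH

variable {X : Type*} [NormedAddCommGroup X] [NormedSpace ℝ X] {e : ℕ → X}

noncomputable def coeffs (hb : IsSchauderBasis e) (x : X) : ℕ → ℝ :=
  (hb x).exists.choose

lemma coeffs_spec (hb : IsSchauderBasis e) (x : X) :
    Tendsto (fun N => ∑ j ∈ Finset.range N, coeffs hb x j • e j) atTop (nhds x) :=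
  (hb x).exists.choose_spec

lemma coeffs_eq (hb : IsSchauderBasis e) {x : X} {a : ℕ → ℝ}
    (h : Tendsto (fun N => ∑ j ∈ Finset.range N, a j • e j) atTop (nhds x)) :
    a = coeffs hb x :=
  (hb x).unique h (coeffs_spec hb x)

lemma coeffs_add (hb : IsSchauderBasis e) (x y : X) :
    coeffs hb (x + y) = coeffs hb x + coeffs hb y := by
  refine (coeffs_eq hb ?_).symm
  have := (coeffs_spec hb x).add (coeffs_spec hb y)
  simpa [← Finset.sum_add_distrib, add_smul] using this

lemma coeffs_smul (hb : IsSchauderBasis e) (t : ℝ) (x : X) :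
    coeffs hb (t • x) = t • coeffs hb x := by
  refine (coeffs_eq hb ?_).symm
  have := (coeffs_spec hb x).const_smul t
  simpa [Finset.smul_sum, smul_smul] using this

/-- uniform projection bound from suppression unconditionality -/
lemma norm_proj_le (hb : IsSchauderBasis e) (hsupp : SuppressionOneUnconditional e)
    (x : X) (A : Finset ℕ) :
    ‖∑ j ∈ A, coeffs hb x j • e j‖ ≤ ‖x‖ := by
  set c := coeffs hb x with hc
  have key : ∀ N : ℕ, (∀ j ∈ A, j < N) →
      ‖∑ j ∈ A, c j • e j‖ ≤ ‖∑ j ∈ Finset.range N, c j • e j‖ := by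
    intro N hN
    set α : ℕ →₀ ℝ := Finsupp.onFinset (Finset.range N)
      (fun j => if j < N then c j else 0)
      (fun j hj => by
        by_cases h : j < N
        · exact Finset.mem_range.mpr h
        · simp [h] at hj) with hα
    have hαval : ∀ j, j < N → α j = c j := by
      intro j hj; simp [hα, Finsupp.onFinset_apply, hj]
    have h1 : ∑ j ∈ A, α j • e j = ∑ j ∈ A, c j • e j := by
      refine Finset.sum_congr rfl fun j hj => by rw [hαval j (hN j hj)]
    have h2 : ∑ j ∈ α.support, α j • e j = ∑ j ∈ Finset.range N, c j • e j := by
      rw [Finset.sum_subset Finsupp.support_onFinset_subset]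
      · refine Finset.sum_congr rfl fun j hj => by
          rw [hαval j (Finset.mem_range.mp hj)]
      · intro j _ hj
        have : α j = 0 := Finsupp.notMem_support_iff.mp hj
        simp [this]
    have := hsupp α A
    rwa [h1, h2] at this
  have htend : Tendsto (fun N => ‖∑ j ∈ Finset.range N, c j • e j‖) atTop (nhds ‖x‖) :=
    (coeffs_spec hb x).norm
  refine ge_of_tendsto htend ?_
  filter_upwards [eventually_ge_atTop ((A.sup id) + 1)] with N hN
  refine key N fun j hj => ?_
  have : j ≤ A.sup id := Finset.le_sup (f := id) hj
  omega

lemma e_ne_zero (hb : IsSchauderBasis e) (j : ℕ) : e j ≠ 0 := by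
  intro h0
  have h1 : Tendsto (fun N => ∑ i ∈ Finset.range N, (0:ℝ) • e i) atTop (nhds (0:X)) := by
    simpa using tendsto_const_nhds (α := X) (x := 0) (f := atTop (α := ℕ))
  have h2 : Tendsto (fun N => ∑ i ∈ Finset.range N,
      (fun i => if i = j then (1:ℝ) else 0) i • e i) atTop (nhds (0:X)) := by
    have : ∀ N, ∑ i ∈ Finset.range N, (if i = j then (1:ℝ) else 0) • e i
        = if j ∈ Finset.range N then e j else 0 := by
      intro N
      rw [← Finset.sum_ite_eq' (Finset.range N) j (fun i => e i)]
      refine Finset.sum_congr rfl fun i _ => by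
        by_cases h : i = j <;> simp [h]
    simp only [this, h0]
    simpa using tendsto_const_nhds (α := X) (x := 0) (f := atTop (α := ℕ))
  have := (coeffs_eq hb h1).trans (coeffs_eq hb h2).symm
  have := congrFun this j
  simp at this

/-- coefficients of a finite linear combination -/
lemma coeffs_finsum (hb : IsSchauderBasis e) (F : Finset ℕ) (b : ℕ → ℝ) :
    coeffs hb (∑ i ∈ F, b i • e i) = fun j => if j ∈ F then b j else 0 := by
  refine (coeffs_eq hb ?_).symm
  apply tendsto_atTop_of_eventually_const (i₀ := (F.sup id) + 1)
  intro N hN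
  have hsub : F ⊆ Finset.range N := by
    intro j hj
    have : j ≤ F.sup id := Finset.le_sup (f := id) hj
    exact Finset.mem_range.mpr (by omega)
  rw [← Finset.sum_subset hsub]
  · exact Finset.sum_congr rfl fun j hj => by simp [hj]
  · intro j _ hj; simp [hj]


lemma abs_coeff_le (hb : IsSchauderBasis e) (hsupp : SuppressionOneUnconditional e)
    (x : X) (j : ℕ) : |coeffs hb x j| ≤ ‖e j‖⁻¹ * ‖x‖ := by
  have h := norm_proj_le hb hsupp x {j}
  rw [Finset.sum_singleton, norm_smul] at h
  have hej : 0 < ‖e j‖ := norm_pos_iff.mpr (e_ne_zero hb j)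
  rw [inv_mul_eq_div, le_div_iff₀ hej]
  simpa [Real.norm_eq_abs] using h

noncomputable def coeffCLM (hb : IsSchauderBasis e) (hsupp : SuppressionOneUnconditional e)
    (j : ℕ) : X →L[ℝ] ℝ :=
  LinearMap.mkContinuous
    { toFun := fun x => coeffs hb x j
      map_add' := fun x y => by simp only [coeffs_add hb x y]; rfl
      map_smul' := fun t x => by simp only [coeffs_smul hb t x]; rfl }
    (‖e j‖⁻¹) (fun x => by
      simpa using abs_coeff_le hb hsupp x j)

@[simp] lemma coeffCLM_apply (hb : IsSchauderBasis e) (hsupp : SuppressionOneUnconditional e)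
    (j : ℕ) (x : X) : coeffCLM hb hsupp j x = coeffs hb x j := rfl

lemma lam_ge_one (hb : IsSchauderBasis e) {lam : ℝ} (hasym : IsAsymptoticC0 e lam) :
    1 ≤ lam := by
  set z : ℕ → X := fun j => ‖e j‖⁻¹ • e j with hz
  have hnz : ∀ j, ‖z j‖ = 1 := by
    intro j
    have := norm_pos_iff.mpr (e_ne_zero hb j)
    rw [hz]; simp [norm_smul, abs_of_pos (inv_pos.mpr this), inv_mul_cancel₀ this.ne']
  have hblock : IsNormalizedBlockBasis e z := by
    refine ⟨fun j => {j}, fun i => ‖e i‖⁻¹, fun j => Finset.singleton_nonempty j,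
      ?_, fun j => by simp [hz], hnz⟩
    intro j i hi i' hi'
    simp only [Finset.mem_singleton] at hi hi'
    omega
  obtain ⟨j, -, hest⟩ := hasym z hblock 1
  have h := (hest 1).2
  have hs : ∑ i : Fin 1, (1 : Fin 1 → ℝ) i • z (j i) = z (j 0) := by simp
  have hsup : (⨆ i : Fin 1, |(1 : Fin 1 → ℝ) i|) = 1 := by
    rw [ciSup_unique]; simp
  rw [hs, hsup, hnz, mul_one] at h
  exact h

lemma exists_weak_cluster [CompleteSpace X]
    (hrefl : Function.Surjective (NormedSpace.inclusionInDoubleDual ℝ X))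
    (hb : IsSchauderBasis e) (hsupp : SuppressionOneUnconditional e)
    (y : ℕ → X) (hy : ∀ n, ‖y n‖ ≤ 1) :
    ∃ x : X, ∀ q : ℕ, ∀ δ : ℝ, 0 < δ → ∃ᶠ n in atTop,
      ‖(∑ j ∈ Finset.range q, coeffs hb (y n) j • e j)
        - ∑ j ∈ Finset.range q, coeffs hb x j • e j‖ < δ := by
  classical
  set D := StrongDual ℝ X
  set J := NormedSpace.inclusionInDoubleDual ℝ X with hJ
  set Φseq : ℕ → WeakDual ℝ D := fun n => StrongDual.toWeakDual (J (y n)) with hΦseq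
  have hcomp : IsCompact (WeakDual.toStrongDual ⁻¹' Metric.closedBall (0 : StrongDual ℝ D) 1) :=
    WeakDual.isCompact_closedBall (0 : StrongDual ℝ D) 1
  have hmem : ∀ n, Φseq n ∈ WeakDual.toStrongDual ⁻¹' Metric.closedBall (0 : StrongDual ℝ D) 1 := by
    intro n
    simp only [Set.mem_preimage, Metric.mem_closedBall, dist_zero_right]
    have h0 : dist (J (y n)) 0 = ‖J (y n)‖ := (dist_zero_right (J (y n)) :)
    exact le_trans (le_trans h0.le (NormedSpace.double_dual_bound ℝ X (y n))) (hy n)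
  have hle : map Φseq atTop ≤ 𝓟 (WeakDual.toStrongDual ⁻¹' Metric.closedBall (0 : StrongDual ℝ D) 1) := by
    rw [le_principal_iff, mem_map]
    exact Eventually.of_forall hmem
  obtain ⟨Φ, hΦs, hcl⟩ := hcomp.exists_clusterPt hle
  obtain ⟨x, hx⟩ := hrefl (WeakDual.toStrongDual Φ)
  refine ⟨x, fun q δ hδ => ?_⟩
  have hmc : MapClusterPt Φ atTop Φseq := hcl
  set g : WeakDual ℝ D → X :=
    fun Ψ => ∑ j ∈ Finset.range q, Ψ (coeffCLM hb hsupp j) • e j with hg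
  have hgc : Continuous g := by
    refine continuous_finset_sum _ fun j _ => ?_
    exact (WeakDual.eval_continuous (coeffCLM hb hsupp j)).smul continuous_const
  have h2 : MapClusterPt (g Φ) atTop (g ∘ Φseq) := hmc.continuousAt_comp hgc.continuousAt
  have freq := mapClusterPt_iff_frequently.mp h2 (Metric.ball (g Φ) δ) (Metric.ball_mem_nhds _ hδ)
  have hgΦ : g Φ = ∑ j ∈ Finset.range q, coeffs hb x j • e j := by
    refine Finset.sum_congr rfl fun j _ => ?_
    have : Φ (coeffCLM hb hsupp j) = coeffs hb x j := by
      have h := congrArg (fun Ψ : StrongDual ℝ D => Ψ (coeffCLM hb hsupp j)) hx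
      exact h.symm.trans (coeffCLM_apply hb hsupp j x)
    rw [this]
  have hgn : ∀ n, (g ∘ Φseq) n = ∑ j ∈ Finset.range q, coeffs hb (y n) j • e j := by
    intro n
    refine Finset.sum_congr rfl fun j _ => ?_
    have : Φseq n (coeffCLM hb hsupp j) = coeffs hb (y n) j :=
      coeffCLM_apply hb hsupp j (y n)
    rw [this]
  refine freq.mono fun n hn => ?_
  rw [Metric.mem_ball, dist_eq_norm, hgn, hgΦ] at hn
  exact hn


lemma key [CompleteSpace X]
    (hrefl : Function.Surjective (NormedSpace.inclusionInDoubleDual ℝ X))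
    (hb : IsSchauderBasis e) (hsupp : SuppressionOneUnconditional e)
    {lam : ℝ} (hasym : IsAsymptoticC0 e lam) (hlam : 0 ≤ lam)
    {σ : ℝ} (y : ℕ → X) (hy1 : ∀ n, ‖y n‖ ≤ 1)
    (hsep : ∀ n m : ℕ, n ≠ m → σ ≤ ‖y n - y m‖)
    {ε : ℝ} (hε : 0 < ε) : σ ≤ lam * (1 + ε) + 5 * ε := by
  classical
  obtain ⟨x, hx⟩ := exists_weak_cluster hrefl hb hsupp y hy1
  set S : ℕ → X → X := fun q v => ∑ j ∈ Finset.range q, coeffs hb v j • e j with hS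
  have hx' : ∀ q : ℕ, ∀ δ : ℝ, 0 < δ → ∃ᶠ n in atTop, ‖S q (y n) - S q x‖ < δ := by
    intro q δ hδ; simpa only [hS] using hx q δ hδ
  -- tail of x
  obtain ⟨p, hp⟩ : ∃ p : ℕ, ∀ u v : ℕ, p ≤ u → u ≤ v →
      ‖∑ j ∈ Finset.Ico u v, coeffs hb x j • e j‖ ≤ ε := by
    have hc : CauchySeq (fun M => S M x) := (coeffs_spec hb x).cauchySeq
    obtain ⟨p, hp⟩ := Metric.cauchySeq_iff'.mp hc (ε / 2) (by positivity)
    refine ⟨p, fun u v hu huv => ?_⟩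
    rw [Finset.sum_Ico_eq_sub _ huv]
    have h1 := hp v (le_trans hu huv)
    have h2 := hp u hu
    rw [dist_eq_norm] at h1 h2
    calc ‖(∑ j ∈ Finset.range v, coeffs hb x j • e j)
          - ∑ j ∈ Finset.range u, coeffs hb x j • e j‖
        = ‖(S v x - S p x) - (S u x - S p x)‖ := by rw [hS]; congr 1; abel
      _ ≤ ‖S v x - S p x‖ + ‖S u x - S p x‖ := norm_sub_le _ _
      _ ≤ ε / 2 + ε / 2 := add_le_add h1.le h2.le
      _ = ε := by ring
  -- tails of the y n
  have hyt : ∀ n q₀ : ℕ, ∃ q, q₀ < q ∧ ‖y n - S q (y n)‖ ≤ ε := by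
    intro n q₀
    have ht : Tendsto (fun M => S M (y n)) atTop (nhds (y n)) := coeffs_spec hb (y n)
    obtain ⟨M₀, hM₀⟩ := Metric.tendsto_atTop.mp ht ε hε
    refine ⟨max q₀ M₀ + 1, by omega, ?_⟩
    have := hM₀ (max q₀ M₀ + 1) (by omega)
    rw [dist_eq_norm, norm_sub_rev] at this
    exact this.le
  -- the recursive construction
  have step : ∀ s : ℕ × ℕ, ∃ s' : ℕ × ℕ, s.1 < s'.1 ∧ s.2 < s'.2 ∧
      ‖S s.2 (y s'.1) - S s.2 x‖ ≤ ε ∧ ‖y s'.1 - S s'.2 (y s'.1)‖ ≤ ε := by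
    intro s
    obtain ⟨n, hn1, hn2⟩ := frequently_atTop.mp (hx' s.2 ε hε) (s.1 + 1)
    obtain ⟨q, hq1, hq2⟩ := hyt n s.2
    exact ⟨(n, q), by omega, hq1, hn2.le, hq2⟩
  set T : ℕ × ℕ → ℕ × ℕ := fun s => (step s).choose with hT
  have hTspec : ∀ s : ℕ × ℕ, s.1 < (T s).1 ∧ s.2 < (T s).2 ∧
      ‖S s.2 (y (T s).1) - S s.2 x‖ ≤ ε ∧ ‖y (T s).1 - S (T s).2 (y (T s).1)‖ ≤ ε :=
    fun s => (step s).choose_spec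
  set sq : ℕ → ℕ × ℕ := fun k => T^[k + 1] (0, p) with hsq
  set N : ℕ → ℕ := fun k => (sq k).1 with hN
  set Q : ℕ → ℕ := fun k => match k with | 0 => p | (k + 1) => (sq k).2 with hQ
  have hsq0 : sq 0 = T (0, p) := by simp [hsq]
  have hsqsucc : ∀ k, sq (k + 1) = T (sq k) := by
    intro k
    show T^[k + 2] (0, p) = T (T^[k + 1] (0, p))
    rw [Function.iterate_succ_apply' T (k + 1)]
  have hmain : ∀ k, Q k < Q (k + 1) ∧ ‖S (Q k) (y (N k)) - S (Q k) x‖ ≤ ε ∧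
      ‖y (N k) - S (Q (k + 1)) (y (N k))‖ ≤ ε ∧ (∀ k', k = k' + 1 → N k' < N k) := by
    intro k
    cases k with
    | zero =>
      have h := hTspec (0, p)
      rw [← hsq0] at h
      exact ⟨h.2.1, h.2.2.1, h.2.2.2, fun k' hk' => by omega⟩
    | succ k =>
      have h := hTspec (sq k)
      rw [← hsqsucc k] at h
      refine ⟨h.2.1, h.2.2.1, h.2.2.2, fun k' hk' => ?_⟩
      obtain rfl : k' = k := by omega
      exact h.1
  have hQmono : StrictMono Q := strictMono_nat_of_lt_succ fun k => (hmain k).1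
  have hQp : ∀ k, p ≤ Q k := fun k => by
    have := hQmono.monotone (Nat.zero_le k); simpa [hQ] using this
  have hNmono : StrictMono N := strictMono_nat_of_lt_succ fun k => (hmain (k + 1)).2.2.2 k rfl
  have hhead : ∀ k, ‖S (Q k) (y (N k)) - S (Q k) x‖ ≤ ε := fun k => (hmain k).2.1
  have htail : ∀ k, ‖y (N k) - S (Q (k + 1)) (y (N k))‖ ≤ ε := fun k => (hmain k).2.2.1
  -- the blocks
  set F : ℕ → Finset ℕ := fun k => Finset.Ico (Q k) (Q (k + 1)) with hF
  set β : ℕ → ℕ → ℝ := fun k i => coeffs hb (y (N k)) i - coeffs hb x i with hβ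
  set b : ℕ → X := fun k => ∑ i ∈ F k, β k i • e i with hbdef
  have hIco : ∀ (v : X) (k : ℕ),
      ∑ i ∈ F k, coeffs hb v i • e i = S (Q (k + 1)) v - S (Q k) v := fun v k =>
    Finset.sum_Ico_eq_sub _ (hQmono (Nat.lt_succ_self k)).le
  have hbsplit : ∀ k, b k = (S (Q (k + 1)) (y (N k)) - S (Q k) (y (N k)))
      - (S (Q (k + 1)) x - S (Q k) x) := by
    intro k
    rw [hbdef]
    simp only [hβ, sub_smul, Finset.sum_sub_distrib]
    rw [hIco, hIco]
  have hxtail : ∀ k l, k ≤ l → ‖S (Q l) x - S (Q k) x‖ ≤ ε := by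
    intro k l hkl
    have h := hp (Q k) (Q l) (hQp k) (hQmono.monotone hkl)
    rwa [Finset.sum_Ico_eq_sub _ (hQmono.monotone hkl)] at h
  have hbnorm : ∀ k, ‖b k‖ ≤ 1 + ε := by
    intro k
    rw [hbsplit k]
    refine (norm_sub_le _ _).trans (add_le_add ?_ (hxtail k (k + 1) (by omega)))
    rw [← hIco]
    exact (norm_proj_le hb hsupp _ _).trans (hy1 _)
  -- remainder estimate
  have hdiff : ∀ k l, k ≤ l → ‖(y (N k) - y (N l)) - (b k - b l)‖ ≤ 5 * ε := by
    intro k l hkl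
    have hr : ∀ m, y (N m) - b m - S (Q (m + 1)) x
        = (y (N m) - S (Q (m + 1)) (y (N m))) + (S (Q m) (y (N m)) - S (Q m) x) := by
      intro m; rw [hbsplit m]; abel
    have hrm : ∀ m, ‖y (N m) - b m - S (Q (m + 1)) x‖ ≤ ε + ε := by
      intro m
      rw [hr m]
      exact (norm_add_le _ _).trans (add_le_add (htail m) (hhead m))
    have eqn : (y (N k) - y (N l)) - (b k - b l)
        = (y (N k) - b k - S (Q (k + 1)) x) - (y (N l) - b l - S (Q (l + 1)) x)
          - (S (Q (l + 1)) x - S (Q (k + 1)) x) := by abel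
    rw [eqn]
    have h1 := hrm k
    have h2 := hrm l
    have h3 := hxtail (k + 1) (l + 1) (by omega)
    calc ‖(y (N k) - b k - S (Q (k + 1)) x) - (y (N l) - b l - S (Q (l + 1)) x)
          - (S (Q (l + 1)) x - S (Q (k + 1)) x)‖
        ≤ ‖(y (N k) - b k - S (Q (k + 1)) x) - (y (N l) - b l - S (Q (l + 1)) x)‖
          + ‖S (Q (l + 1)) x - S (Q (k + 1)) x‖ := norm_sub_le _ _
      _ ≤ (‖y (N k) - b k - S (Q (k + 1)) x‖ + ‖y (N l) - b l - S (Q (l + 1)) x‖)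
          + ‖S (Q (l + 1)) x - S (Q (k + 1)) x‖ := by gcongr; exact norm_sub_le _ _
      _ ≤ ((ε + ε) + (ε + ε)) + ε := by gcongr
      _ = 5 * ε := by ring
  -- the normalized block basis
  set w : ℕ → X := fun k => if b k = 0 then e (Q k) else b k with hwdef
  set γ : ℕ → ℕ → ℝ := fun k i => if b k = 0 then (if i = Q k then 1 else 0) else β k i with hγ
  have hQF : ∀ k, Q k ∈ F k := fun k => Finset.mem_Ico.mpr ⟨le_refl _, hQmono (Nat.lt_succ_self k)⟩
  have hw : ∀ k, w k = ∑ i ∈ F k, γ k i • e i := by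
    intro k
    by_cases h : b k = 0
    · simp only [hwdef, hγ, h, if_pos, if_true]
      have h1 : ∀ i, (if i = Q k then (1:ℝ) else 0) • e i = if i = Q k then e i else 0 := by
        intro i; by_cases hi : i = Q k <;> simp [hi]
      rw [Finset.sum_congr rfl fun i _ => h1 i, Finset.sum_ite_eq' (F k) (Q k) e,
        if_pos (hQF k)]
    · simp only [hwdef, hγ, h, if_false]; rfl
  have hwne : ∀ k, w k ≠ 0 := by
    intro k
    by_cases h : b k = 0
    · simp only [hwdef, h, if_true]; exact e_ne_zero hb (Q k)
    · simp only [hwdef, h, if_false]; exact h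
  set z : ℕ → X := fun k => ‖w k‖⁻¹ • w k with hz
  have hznorm : ∀ k, ‖z k‖ = 1 := by
    intro k
    have h : 0 < ‖w k‖ := norm_pos_iff.mpr (hwne k)
    rw [hz]
    simp [norm_smul, abs_of_pos (inv_pos.mpr h), inv_mul_cancel₀ h.ne']
  have hFdisj : ∀ {i k l : ℕ}, i ∈ F k → i ∈ F l → k = l := by
    intro i k l hk hl
    rw [hF, Finset.mem_Ico] at hk hl
    by_contra h
    rcases Nat.lt_or_ge k l with h' | h'
    · have hq : Q (k + 1) ≤ Q l := hQmono.monotone (Nat.succ_le_of_lt h')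
      omega
    · have h'' : l < k := by omega
      have hq : Q (l + 1) ≤ Q k := hQmono.monotone (Nat.succ_le_of_lt h'')
      omega
  set A : ℕ → ℝ := fun i => if h : ∃ k, i ∈ F k then γ h.choose i / ‖w h.choose‖ else 0
    with hA
  have hzrep : ∀ k, z k = ∑ i ∈ F k, A i • e i := by
    intro k
    have h1 : ∀ i ∈ F k, A i • e i = (‖w k‖⁻¹ * γ k i) • e i := by
      intro i hi
      have hex : ∃ k', i ∈ F k' := ⟨k, hi⟩
      have hck : hex.choose = k := hFdisj hex.choose_spec hi
      rw [hA]
      simp only [dif_pos hex, hck]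
      rw [div_eq_inv_mul]
    rw [Finset.sum_congr rfl h1]
    simp only [mul_smul, ← Finset.smul_sum]
    rw [← hw k, hz]
  have hblock : IsNormalizedBlockBasis e z := by
    refine ⟨F, A, ?_, ?_, hzrep, hznorm⟩
    · intro k
      exact Finset.nonempty_Ico.mpr (hQmono (Nat.lt_succ_self k))
    · intro k i hi i' hi'
      rw [hF, Finset.mem_Ico] at hi hi'
      omega
  have hbz : ∀ k, b k = ‖b k‖ • z k := by
    intro k
    by_cases h : b k = 0
    · simp [h]
    · rw [hz]
      simp only [hwdef, h, if_false]
      rw [smul_smul, mul_inv_cancel₀ (norm_ne_zero_iff.mpr h), one_smul]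
  -- apply the asymptotic-c₀ property
  obtain ⟨j, hjmono, hest⟩ := hasym z hblock 2
  set a2 : Fin 2 → ℝ := ![‖b (j 0)‖, -‖b (j 1)‖] with ha2
  have hsum : ∑ i, a2 i • z (j i) = b (j 0) - b (j 1) := by
    rw [Fin.sum_univ_two]
    have e0 : a2 0 = ‖b (j 0)‖ := rfl
    have e1 : a2 1 = -‖b (j 1)‖ := rfl
    rw [e0, e1, neg_smul, ← hbz, ← hbz]
    abel
  have hsup : (⨆ i, |a2 i|) ≤ 1 + ε := by
    refine ciSup_le fun i => ?_
    fin_cases i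
    · simpa [ha2, abs_norm] using hbnorm (j 0)
    · simpa [ha2, abs_norm] using hbnorm (j 1)
  have hub := (hest a2).2
  rw [hsum] at hub
  have h1 : ‖b (j 0) - b (j 1)‖ ≤ lam * (1 + ε) :=
    hub.trans (mul_le_mul_of_nonneg_left hsup hlam)
  have hj01 : j 0 < j 1 := hjmono (by norm_num)
  have hne : N (j 0) ≠ N (j 1) := (hNmono.injective.ne hj01.ne)
  calc σ ≤ ‖y (N (j 0)) - y (N (j 1))‖ := hsep _ _ hne
    _ ≤ ‖b (j 0) - b (j 1)‖ + ‖(y (N (j 0)) - y (N (j 1))) - (b (j 0) - b (j 1))‖ := by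
        have heq : y (N (j 0)) - y (N (j 1)) = (b (j 0) - b (j 1))
            + ((y (N (j 0)) - y (N (j 1))) - (b (j 0) - b (j 1))) := by abel
        conv_lhs => rw [heq]
        exact norm_add_le _ _
    _ ≤ lam * (1 + ε) + 5 * ε := add_le_add h1 (hdiff _ _ hj01.le)


end SH

/-- The sliding-hump upper bound for Tsirelson-like spaces (abstract form of Theorem 4.1):
a reflexive Banach space with a suppression `1`-unconditional, `λ`-asymptotic `c₀`
Schauder basis satisfies `K(X) ≤ λ`. -/
theorem kottman_le_of_asymptotic_c0_suppression (X : Type*) [NormedAddCommGroup X]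
    [NormedSpace ℝ X] [CompleteSpace X]
    (hrefl : Function.Surjective (NormedSpace.inclusionInDoubleDual ℝ X))
    (e : ℕ → X) (hbasis : IsSchauderBasis e)
    (hsupp : SuppressionOneUnconditional e)
    (lam : ℝ) (hasym : IsAsymptoticC0 e lam) :
    kottmanConst X ≤ lam := by
  have hlam1 : 1 ≤ lam := SH.lam_ge_one hbasis hasym
  have hlam0 : 0 ≤ lam := zero_le_one.trans hlam1
  refine Real.sSup_le ?_ hlam0
  rintro σ ⟨hσ0, y, hy1, hsep⟩
  by_contra hgt
  push_neg at hgt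
  set ε := (σ - lam) / (lam + 6) with hεdef
  have hε : 0 < ε := div_pos (by linarith) (by linarith)
  have hkey := SH.key hrefl hbasis hsupp hasym hlam0 y hy1 hsep hε
  have hne : lam + 6 ≠ 0 := by linarith
  have h4 : lam + (lam + 6) * ε = σ := by
    rw [hεdef]; field_simp; ring
  nlinarith [hε, hlam0]
end

section
/- Let X be a Banach space with a Schauder basis (e_j)_{j=1}^∞ that is λ-asymptotic c₀, i.e., for every normalized block basis (x_j)_{j=1}^∞ of (e_j) and every n ∈ ℕ there exist indices j_1 < ... < j_n with max_{1≤i≤n}|a_i| ≤ ‖Σ_{i=1}^n a_i x_{j_i}‖ ≤ λ · max_{1≤i≤n}|a_i| for all scalars a_1, ..., a_n. Then γ₀(X) ≤ λ; that is, whenever the closed unit ball of X contains a weakly null sequence (x_n)_{n=1}^∞ with ‖x_n − x_m‖ ≥ r for all n ≠ m, one has r ≤ λ. -/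
open Filter Topology

/-- The constant `γ₀(X)`: the supremum of all `r ≥ 0` such that the closed unit ball of
`X` contains a weakly null `r`-separated sequence. -/
noncomputable def gammaZero (X : Type*) [NormedAddCommGroup X] [NormedSpace ℝ X] : ℝ :=
  sSup {r : ℝ | 0 ≤ r ∧ ∃ x : ℕ → X, (∀ n, ‖x n‖ ≤ 1) ∧
    (∀ f : X →L[ℝ] ℝ, Tendsto (fun n => f (x n)) atTop (nhds 0)) ∧
    ∀ n m : ℕ, n ≠ m → r ≤ ‖x n - x m‖}

namespace GH
variable {X : Type*} [NormedAddCommGroup X] [NormedSpace ℝ X]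

noncomputable def coef (e : ℕ → X) (hb : IsSchauderBasis e) (x : X) : ℕ → ℝ :=
  (hb x).exists.choose

theorem coef_tendsto (e : ℕ → X) (hb : IsSchauderBasis e) (x : X) :
    Tendsto (fun N => ∑ j ∈ Finset.range N, coef e hb x j • e j) atTop (𝓝 x) :=
  (hb x).exists.choose_spec

theorem coef_unique (e : ℕ → X) (hb : IsSchauderBasis e) (x : X) (a : ℕ → ℝ)
    (ha : Tendsto (fun N => ∑ j ∈ Finset.range N, a j • e j) atTop (𝓝 x)) :
    a = coef e hb x :=
  (hb x).unique ha (coef_tendsto e hb x)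

theorem coef_zero (e : ℕ → X) (hb : IsSchauderBasis e) : coef e hb 0 = 0 := by
  symm
  apply coef_unique
  simpa using tendsto_const_nhds

theorem coef_add (e : ℕ → X) (hb : IsSchauderBasis e) (x y : X) :
    coef e hb (x + y) = coef e hb x + coef e hb y := by
  symm
  apply coef_unique
  have := (coef_tendsto e hb x).add (coef_tendsto e hb y)
  simpa [Finset.sum_add_distrib, add_smul] using this

theorem coef_smul (e : ℕ → X) (hb : IsSchauderBasis e) (c : ℝ) (x : X) :
    coef e hb (c • x) = c • coef e hb x := by
  symm
  apply coef_unique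
  have := (coef_tendsto e hb x).const_smul c
  simpa [Finset.smul_sum, smul_smul] using this

theorem e_ne_zero (e : ℕ → X) (hb : IsSchauderBasis e) (j : ℕ) : e j ≠ 0 := by
  intro hj
  have h1 : Tendsto (fun N => ∑ i ∈ Finset.range N,
      (fun i => if i = j then (1:ℝ) else 0) i • e i) atTop (𝓝 0) := by
    have : ∀ N, ∑ i ∈ Finset.range N, (if i = j then (1:ℝ) else 0) • e i = 0 := by
      intro N
      apply Finset.sum_eq_zero
      intro i _
      by_cases h : i = j <;> simp [h, hj]
    have heq : (fun N => ∑ i ∈ Finset.range N,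
        (fun i => if i = j then (1:ℝ) else 0) i • e i) = fun _ => (0:X) := by
      funext N; simpa using this N
    rw [heq]
    exact tendsto_const_nhds
  have h2 := coef_unique e hb 0 _ h1
  have h3 := coef_zero e hb
  have := congrFun (h2.trans h3) j
  simp at this

end GH


namespace GH
variable {X : Type*} [NormedAddCommGroup X] [NormedSpace ℝ X]

noncomputable def Zmod (e : ℕ → X) : Submodule ℝ (BoundedContinuousFunction ℕ X) where
  carrier := {u | u 0 = 0 ∧ (∀ N, u (N+1) - u N ∈ Submodule.span ℝ {e N}) ∧ CauchySeq ⇑u}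
  zero_mem' := by
    refine ⟨rfl, fun N => by simp, cauchySeq_const 0⟩
  add_mem' := by
    rintro u v ⟨hu0, huN, huC⟩ ⟨hv0, hvN, hvC⟩
    refine ⟨by simp [hu0, hv0], fun N => ?_, ?_⟩
    · have h := Submodule.add_mem _ (huN N) (hvN N)
      have : (u + v) (N + 1) - (u + v) N
          = (u (N+1) - u N) + (v (N+1) - v N) := by simp; abel
      rw [this]; exact h
    · have : ⇑(u + v) = fun n => u n + v n := rfl
      rw [this]; exact huC.add hvC
  smul_mem' := by
    rintro c u ⟨hu0, huN, huC⟩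
    refine ⟨by simp [hu0], fun N => ?_, ?_⟩
    · have h := Submodule.smul_mem _ c (huN N)
      have : (c • u) (N + 1) - (c • u) N = c • (u (N+1) - u N) := by
        simp [smul_sub]
      rw [this]; exact h
    · have : ⇑(c • u) = fun n => c • u n := rfl
      rw [this]
      exact (uniformContinuous_const_smul c).comp_cauchySeq huC

theorem mem_Zmod_iff (e : ℕ → X) (u : BoundedContinuousFunction ℕ X) :
    u ∈ Zmod e ↔ u 0 = 0 ∧ (∀ N, u (N+1) - u N ∈ Submodule.span ℝ {e N}) ∧ CauchySeq ⇑u :=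
  Iff.rfl

theorem Zmod_closed (e : ℕ → X) :
    IsClosed {u : BoundedContinuousFunction ℕ X | u ∈ Zmod e} := by
  have hev : ∀ k : ℕ, Continuous (fun u : BoundedContinuousFunction ℕ X => u k) :=
    fun k => continuous_eval_const k
  have h1 : IsClosed {u : BoundedContinuousFunction ℕ X | u 0 = 0} :=
    isClosed_eq (hev 0) continuous_const
  have h2 : ∀ N : ℕ, IsClosed {u : BoundedContinuousFunction ℕ X |
      u (N+1) - u N ∈ Submodule.span ℝ {e N}} := by
    intro N
    haveI : FiniteDimensional ℝ (Submodule.span ℝ ({e N} : Set X)) :=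
      FiniteDimensional.span_of_finite ℝ (Set.finite_singleton _)
    exact IsClosed.preimage ((hev (N+1)).sub (hev N))
      (Submodule.closed_of_finiteDimensional _)
  have h3 : IsClosed {u : BoundedContinuousFunction ℕ X | CauchySeq ⇑u} := by
    apply isClosed_of_closure_subset
    intro u hu
    rw [Set.mem_setOf_eq, Metric.cauchySeq_iff]
    intro ε hε
    obtain ⟨v, hv, hdv⟩ := Metric.mem_closure_iff.mp hu (ε/3) (by linarith)
    obtain ⟨N, hN⟩ := Metric.cauchySeq_iff.mp hv (ε/3) (by linarith)
    refine ⟨N, fun m hm n hn => ?_⟩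
    have d1 : dist (u m) (v m) ≤ dist u v := BoundedContinuousFunction.dist_coe_le_dist m
    have d2 : dist (v n) (u n) ≤ dist u v := by
      rw [dist_comm (v n)]; exact BoundedContinuousFunction.dist_coe_le_dist n
    calc dist (u m) (u n) ≤ dist (u m) (v m) + dist (v m) (v n) + dist (v n) (u n) :=
          dist_triangle4 _ _ _ _
      _ < ε/3 + ε/3 + ε/3 := by
          have h4 := hN m hm n hn
          have hc : dist u v = dist v u := dist_comm u v
          linarith [d1, d2, h4, hdv, hc]
      _ = ε := by ring
  have hset : {u : BoundedContinuousFunction ℕ X | u ∈ Zmod e}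
      = {u : BoundedContinuousFunction ℕ X | u 0 = 0} ∩
        ((⋂ N : ℕ, {u : BoundedContinuousFunction ℕ X |
          u (N+1) - u N ∈ Submodule.span ℝ {e N}}) ∩
         {u : BoundedContinuousFunction ℕ X | CauchySeq ⇑u}) := by
    ext u
    simp only [Set.mem_setOf_eq, mem_Zmod_iff, Set.mem_inter_iff, Set.mem_iInter]
  rw [hset]
  exact h1.inter ((isClosed_iInter h2).inter h3)

end GH


section P2B
namespace GH
variable {X : Type*} [NormedAddCommGroup X] [NormedSpace ℝ X] [CompleteSpace X]

theorem Zmod_cauchy {e : ℕ → X} (u : Zmod e) :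
    CauchySeq (⇑(u : BoundedContinuousFunction ℕ X)) :=
  ((mem_Zmod_iff e u.1).mp u.2).2.2

noncomputable def Tfun (e : ℕ → X) (u : Zmod e) : X :=
  (cauchySeq_tendsto_of_complete (Zmod_cauchy u)).choose

theorem Tfun_spec (e : ℕ → X) (u : Zmod e) :
    Tendsto (fun N => (u : BoundedContinuousFunction ℕ X) N) atTop (𝓝 (Tfun e u)) :=
  (cauchySeq_tendsto_of_complete (Zmod_cauchy u)).choose_spec

noncomputable def Tlin (e : ℕ → X) : Zmod e →ₗ[ℝ] X where
  toFun := Tfun e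
  map_add' u v := by
    refine tendsto_nhds_unique ?_ ((Tfun_spec e u).add (Tfun_spec e v))
    have heq : (fun N => ((u + v : Zmod e) : BoundedContinuousFunction ℕ X) N)
        = fun N => (u : BoundedContinuousFunction ℕ X) N
          + (v : BoundedContinuousFunction ℕ X) N := by
      funext N; simp
    rw [← heq]; exact Tfun_spec e (u + v)
  map_smul' c u := by
    refine tendsto_nhds_unique ?_ ((Tfun_spec e u).const_smul c)
    have heq : (fun N => ((c • u : Zmod e) : BoundedContinuousFunction ℕ X) N)
        = fun N => c • (u : BoundedContinuousFunction ℕ X) N := by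
      funext N; simp
    rw [← heq]; exact Tfun_spec e (c • u)

theorem Tfun_norm_le (e : ℕ → X) (u : Zmod e) : ‖Tfun e u‖ ≤ ‖u‖ := by
  refine le_of_tendsto (Tfun_spec e u).norm ?_
  filter_upwards with N
  exact BoundedContinuousFunction.norm_coe_le_norm _ N

theorem Tfun_continuous (e : ℕ → X) : Continuous (Tfun e) :=
  AddMonoidHomClass.continuous_of_bound (Tlin e) 1 (fun u => by rw [one_mul]; exact Tfun_norm_le e u)

noncomputable def zcoef (e : ℕ → X) (u : Zmod e) (N : ℕ) : ℝ :=
  (Submodule.mem_span_singleton.mp (((mem_Zmod_iff e u.1).mp u.2).2.1 N)).choose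

theorem zcoef_spec (e : ℕ → X) (u : Zmod e) (N : ℕ) :
    zcoef e u N • e N = (u : BoundedContinuousFunction ℕ X) (N+1)
      - (u : BoundedContinuousFunction ℕ X) N :=
  (Submodule.mem_span_singleton.mp (((mem_Zmod_iff e u.1).mp u.2).2.1 N)).choose_spec

theorem zpartial (e : ℕ → X) (u : Zmod e) (N : ℕ) :
    (u : BoundedContinuousFunction ℕ X) N = ∑ j ∈ Finset.range N, zcoef e u j • e j := by
  induction N with
  | zero => simpa using ((mem_Zmod_iff e u.1).mp u.2).1
  | succ N ih => rw [Finset.sum_range_succ, ← ih, zcoef_spec]; abel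

theorem zcoef_eq_coef {e : ℕ → X} (hb : IsSchauderBasis e) (u : Zmod e) :
    zcoef e u = coef e hb (Tfun e u) := by
  apply coef_unique
  have heq : (fun N => ∑ j ∈ Finset.range N, zcoef e u j • e j)
      = fun N => (u : BoundedContinuousFunction ℕ X) N := by
    funext N; exact (zpartial e u N).symm
  rw [heq]; exact Tfun_spec e u

theorem Tlin_inj {e : ℕ → X} (hb : IsSchauderBasis e) : Function.Injective (Tlin e) := by
  have : ∀ u : Zmod e, Tlin e u = 0 → u = 0 := by
    intro u hu
    have hz : zcoef e u = coef e hb 0 := by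
      have := zcoef_eq_coef hb u
      rwa [show Tfun e u = 0 from hu] at this
    rw [coef_zero e hb] at hz
    have hN : ∀ N, (u : BoundedContinuousFunction ℕ X) N = 0 := by
      intro N
      rw [zpartial e u N]
      apply Finset.sum_eq_zero
      intro j _
      rw [hz]; simp
    apply Subtype.ext
    exact BoundedContinuousFunction.ext hN
  intro u v huv
  have : u - v = 0 := this _ (by rw [map_sub, huv, sub_self])
  exact sub_eq_zero.mp this

theorem Tlin_surj {e : ℕ → X} (hb : IsSchauderBasis e) : Function.Surjective (Tlin e) := by
  intro x
  have hx := coef_tendsto e hb x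
  obtain ⟨C, hC⟩ := hx.norm.bddAbove_range
  have hC' : ∀ N : ℕ, ‖∑ j ∈ Finset.range N, coef e hb x j • e j‖ ≤ C := by
    intro N; exact hC ⟨N, rfl⟩
  set ub : BoundedContinuousFunction ℕ X :=
    BoundedContinuousFunction.ofNormedAddCommGroup
      (fun N => ∑ j ∈ Finset.range N, coef e hb x j • e j)
      continuous_of_discreteTopology C hC' with hub
  have hubap : ∀ N, ub N = ∑ j ∈ Finset.range N, coef e hb x j • e j := fun N => rfl
  have hmem : ub ∈ Zmod e := by
    refine (mem_Zmod_iff e ub).mpr ⟨by simp [hubap], fun N => ?_, ?_⟩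
    · rw [Submodule.mem_span_singleton]
      refine ⟨coef e hb x N, ?_⟩
      rw [hubap, hubap, Finset.sum_range_succ]
      abel
    · have : ⇑ub = fun N => ∑ j ∈ Finset.range N, coef e hb x j • e j := rfl
      rw [this]; exact hx.cauchySeq
  refine ⟨⟨ub, hmem⟩, ?_⟩
  refine tendsto_nhds_unique ?_ hx
  exact Tfun_spec e ⟨ub, hmem⟩

noncomputable def CLE (e : ℕ → X) (hb : IsSchauderBasis e) : Zmod e ≃L[ℝ] X := by
  haveI : CompleteSpace (Zmod e) := (Zmod_closed e).completeSpace_coe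
  exact LinearEquiv.toContinuousLinearEquivOfContinuous
    (LinearEquiv.ofBijective (Tlin e) ⟨Tlin_inj hb, Tlin_surj hb⟩)
    (Tfun_continuous e)

theorem CLE_apply (e : ℕ → X) (hb : IsSchauderBasis e) (u : Zmod e) :
    CLE e hb u = Tfun e u := rfl

theorem coef_op_bound (e : ℕ → X) (hb : IsSchauderBasis e) :
    ∃ C : ℝ, 0 ≤ C ∧ ∀ (x : X) (j : ℕ), |coef e hb x j| * ‖e j‖ ≤ C * ‖x‖ := by
  set Φ : X →L[ℝ] Zmod e := ((CLE e hb).symm : X →L[ℝ] Zmod e) with hΦ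
  refine ⟨2 * ‖Φ‖, by positivity, fun x j => ?_⟩
  set u : Zmod e := (CLE e hb).symm x with hu
  have hTx : Tfun e u = x := by
    rw [← CLE_apply e hb u, hu]
    exact (CLE e hb).apply_symm_apply x
  have hz : zcoef e u = coef e hb x := by
    rw [zcoef_eq_coef hb u, hTx]
  have hnu : ‖u‖ ≤ ‖Φ‖ * ‖x‖ := by
    have := Φ.le_opNorm x
    simpa [hΦ, hu] using this
  calc |coef e hb x j| * ‖e j‖ = ‖coef e hb x j • e j‖ := by
        rw [norm_smul, Real.norm_eq_abs]
    _ = ‖(u : BoundedContinuousFunction ℕ X) (j+1)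
          - (u : BoundedContinuousFunction ℕ X) j‖ := by rw [← hz, zcoef_spec]
    _ ≤ ‖(u : BoundedContinuousFunction ℕ X) (j+1)‖
          + ‖(u : BoundedContinuousFunction ℕ X) j‖ := norm_sub_le _ _
    _ ≤ ‖u‖ + ‖u‖ := add_le_add
          (BoundedContinuousFunction.norm_coe_le_norm _ _)
          (BoundedContinuousFunction.norm_coe_le_norm _ _)
    _ = 2 * ‖u‖ := by ring
    _ ≤ 2 * (‖Φ‖ * ‖x‖) := by linarith
    _ = (2 * ‖Φ‖) * ‖x‖ := by ring

theorem coef_weakly_null (e : ℕ → X) (hb : IsSchauderBasis e) (x : ℕ → X)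
    (hw : ∀ f : X →L[ℝ] ℝ, Tendsto (fun n => f (x n)) atTop (𝓝 0)) (j : ℕ) :
    Tendsto (fun n => coef e hb (x n) j) atTop (𝓝 0) := by
  obtain ⟨C, hC0, hC⟩ := coef_op_bound e hb
  have hej : 0 < ‖e j‖ := norm_pos_iff.mpr (e_ne_zero e hb j)
  set L : X →ₗ[ℝ] ℝ :=
    { toFun := fun y => coef e hb y j,
      map_add' := fun y z => congrFun (coef_add e hb y z) j
      map_smul' := fun c y => congrFun (coef_smul e hb c y) j } with hL
  have hLb : ∀ y, ‖L y‖ ≤ (C / ‖e j‖) * ‖y‖ := by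
    intro y
    have h1 := hC y j
    have h2 : ‖L y‖ = |coef e hb y j| := rfl
    rw [h2, div_mul_eq_mul_div, le_div_iff₀ hej]
    nlinarith [h1]
  exact hw (LinearMap.mkContinuous L (C / ‖e j‖) hLb)

theorem head_weakly_null (e : ℕ → X) (hb : IsSchauderBasis e) (x : ℕ → X)
    (hw : ∀ f : X →L[ℝ] ℝ, Tendsto (fun n => f (x n)) atTop (𝓝 0)) (N : ℕ) :
    Tendsto (fun n => ∑ j ∈ Finset.range N, coef e hb (x n) j • e j) atTop (𝓝 0) := by
  have h := tendsto_finset_sum (Finset.range N)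
    (fun j _ => (coef_weakly_null e hb x hw j).smul_const (e j))
  simpa using h

end GH
end P2B


namespace GH
variable {X : Type*} [NormedAddCommGroup X] [NormedSpace ℝ X]

theorem one_le_lam (e : ℕ → X) (hb : IsSchauderBasis e) {lam : ℝ}
    (ha : IsAsymptoticC0 e lam) : 1 ≤ lam := by
  have hne : ∀ j, e j ≠ 0 := e_ne_zero e hb
  have hpos : ∀ j, (0:ℝ) < ‖e j‖ := fun j => norm_pos_iff.mpr (hne j)
  set y : ℕ → X := fun j => ‖e j‖⁻¹ • e j with hy
  have hnorm : ∀ j, ‖y j‖ = 1 := by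
    intro j
    rw [hy]
    simp only [norm_smul, norm_inv, norm_norm]
    exact inv_mul_cancel₀ (ne_of_gt (hpos j))
  have hnb : IsNormalizedBlockBasis e y := by
    refine ⟨fun j => {j}, fun i => ‖e i‖⁻¹, fun j => ⟨j, Finset.mem_singleton_self j⟩,
      ?_, fun j => by simp [hy], hnorm⟩
    intro j i hi i' hi'
    rw [Finset.mem_singleton] at hi hi'
    omega
  obtain ⟨j, hmono, hband⟩ := ha y hnb 1
  obtain ⟨-, hup⟩ := hband (fun _ => 1)
  have hsum : ∑ i : Fin 1, (1:ℝ) • y (j i) = y (j 0) := by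
    rw [Fin.sum_univ_one, one_smul]
  have hsup : (⨆ _ : Fin 1, |(1:ℝ)|) = 1 := by
    rw [ciSup_const]; norm_num
  rw [hsum, hsup, hnorm (j 0), mul_one] at hup
  exact hup

variable [CompleteSpace X]

theorem key_estimate (e : ℕ → X) (hb : IsSchauderBasis e) {lam : ℝ}
    (hasym : IsAsymptoticC0 e lam) (r : ℝ) (x : ℕ → X) (hx1 : ∀ n, ‖x n‖ ≤ 1)
    (hw : ∀ f : X →L[ℝ] ℝ, Filter.Tendsto (fun n => f (x n)) Filter.atTop (nhds 0))
    (hsep : ∀ n m : ℕ, n ≠ m → r ≤ ‖x n - x m‖) : r ≤ lam := by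
  have hlam1 : 1 ≤ lam := one_le_lam e hb hasym
  by_cases hr1 : r ≤ 1
  · linarith
  push_neg at hr1
  -- eventually the norms are bounded below by 1/2
  have hBex : ∃ B : ℕ, ∀ n, B ≤ n → (1:ℝ)/2 ≤ ‖x n‖ := by
    by_contra h
    push_neg at h
    obtain ⟨n, hn, hn2⟩ := h 0
    obtain ⟨m, hm, hm2⟩ := h (n+1)
    have hnm : n ≠ m := by omega
    have h1 := hsep n m hnm
    have h2 : ‖x n - x m‖ ≤ ‖x n‖ + ‖x m‖ := norm_sub_le _ _
    linarith
  obtain ⟨B, hB⟩ := hBex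
  set y : ℕ → X := fun n => x (n + B) with hydef
  have hy1 : ∀ n, ‖y n‖ ≤ 1 := fun n => hx1 (n + B)
  have hy2 : ∀ n, (1:ℝ)/2 ≤ ‖y n‖ := fun n => hB (n + B) (by omega)
  have hysep : ∀ n m : ℕ, n ≠ m → r ≤ ‖y n - y m‖ := by
    intro n m hnm
    exact hsep (n + B) (m + B) (by omega)
  have hyw : ∀ f : X →L[ℝ] ℝ, Filter.Tendsto (fun n => f (y n)) Filter.atTop (nhds 0) := by
    intro f
    exact (hw f).comp (Filter.tendsto_add_atTop_nat B)
  -- reduce to an ε-statement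
  suffices hkey : ∀ ε : ℝ, 0 < ε → ε ≤ 1/8 → r ≤ lam * (1 + ε) + 2 * ε by
    by_contra hrl
    push_neg at hrl
    set ε : ℝ := min (1/8 : ℝ) ((r - lam)/(2*(lam+2))) with hε
    have hpos2 : (0:ℝ) < lam + 2 := by linarith
    have hε0 : 0 < ε := lt_min (by norm_num) (div_pos (by linarith) (by linarith))
    have h := hkey ε hε0 (min_le_left _ _)
    have hε2 : ε ≤ (r - lam)/(2*(lam+2)) := min_le_right _ _
    have h3 : ε * (lam + 2) ≤ (r - lam)/2 := by
      calc ε * (lam + 2) ≤ (r - lam)/(2*(lam+2)) * (lam + 2) := by nlinarith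
        _ = (r - lam)/2 := by field_simp
    nlinarith
  intro ε hε0 hε8
  -- the gliding hump construction
  have hhead := head_weakly_null e hb y hyw
  have hstep : ∀ p : ℕ × ℕ, ∃ q : ℕ × ℕ, p.1 < q.1 ∧ p.2 < q.2 ∧
      ‖∑ i ∈ Finset.range p.2, coef e hb (y q.1) i • e i‖ ≤ ε/2 ∧
      ‖y q.1 - ∑ i ∈ Finset.range q.2, coef e hb (y q.1) i • e i‖ ≤ ε/2 := by
    intro p
    obtain ⟨M, hM⟩ := Metric.tendsto_atTop.mp (hhead p.2) (ε/2) (by linarith)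
    set m : ℕ := max M (p.1+1) with hm
    have hm1 : p.1 < m := lt_of_lt_of_le (Nat.lt_succ_self _) (le_max_right _ _)
    have hsmall : ‖∑ i ∈ Finset.range p.2, coef e hb (y m) i • e i‖ ≤ ε/2 := by
      have := hM m (le_max_left _ _)
      rw [dist_zero_right] at this
      linarith
    obtain ⟨M2, hM2⟩ := Metric.tendsto_atTop.mp (coef_tendsto e hb (y m)) (ε/2) (by linarith)
    refine ⟨(m, max M2 (p.2+1)), hm1,
      lt_of_lt_of_le (Nat.lt_succ_self _) (le_max_right _ _), hsmall, ?_⟩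
    have := hM2 (max M2 (p.2+1)) (le_max_left _ _)
    rw [dist_comm, dist_eq_norm] at this
    exact le_of_lt this
  choose step hstep1 hstep2 hstep3 hstep4 using hstep
  obtain ⟨Q, hQ0, hQs⟩ : ∃ Q : ℕ → ℕ × ℕ, Q 0 = (0,0) ∧ ∀ k, Q (k+1) = step (Q k) :=
    ⟨fun k => Nat.rec ((0:ℕ),(0:ℕ)) (fun _ q => step q) k, rfl, fun k => rfl⟩
  set n : ℕ → ℕ := fun k => (Q (k+1)).1 with hn
  set Nc : ℕ → ℕ := fun k => (Q k).2 with hNc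
  have hnk : ∀ k, n k = (step (Q k)).1 := fun k => by rw [hn]; simp [hQs k]
  have hNck : ∀ k, Nc (k+1) = (step (Q k)).2 := fun k => by rw [hNc]; simp [hQs k]
  have hNmono : StrictMono Nc := by
    apply strictMono_nat_of_lt_succ
    intro k
    rw [hNck k]
    exact hstep2 (Q k)
  have hnmono : StrictMono n := by
    apply strictMono_nat_of_lt_succ
    intro k
    have := hstep1 (Q (k+1))
    rw [← hnk (k+1)] at this
    exact this
  have hhead' : ∀ k, ‖∑ i ∈ Finset.range (Nc k), coef e hb (y (n k)) i • e i‖ ≤ ε/2 := by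
    intro k
    have := hstep3 (Q k)
    rw [← hnk k] at this
    exact this
  have htail' : ∀ k, ‖y (n k) - ∑ i ∈ Finset.range (Nc (k+1)), coef e hb (y (n k)) i • e i‖
      ≤ ε/2 := by
    intro k
    have := hstep4 (Q k)
    rw [← hnk k, ← hNck k] at this
    exact this
  set b : ℕ → X := fun k => ∑ i ∈ Finset.Ico (Nc k) (Nc (k+1)), coef e hb (y (n k)) i • e i
    with hbdef
  have hbdiff : ∀ k, b k = (∑ i ∈ Finset.range (Nc (k+1)), coef e hb (y (n k)) i • e i)
      - (∑ i ∈ Finset.range (Nc k), coef e hb (y (n k)) i • e i) := by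
    intro k
    rw [hbdef]
    exact Finset.sum_Ico_eq_sub _ (le_of_lt (hNmono (Nat.lt_succ_self k)))
  have hberr : ∀ k, ‖y (n k) - b k‖ ≤ ε := by
    intro k
    rw [hbdiff k]
    have heq : y (n k) - ((∑ i ∈ Finset.range (Nc (k+1)), coef e hb (y (n k)) i • e i)
        - (∑ i ∈ Finset.range (Nc k), coef e hb (y (n k)) i • e i))
        = (y (n k) - ∑ i ∈ Finset.range (Nc (k+1)), coef e hb (y (n k)) i • e i)
          + ∑ i ∈ Finset.range (Nc k), coef e hb (y (n k)) i • e i := by abel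
    rw [heq]
    calc ‖_ + _‖ ≤ _ + _ := norm_add_le _ _
      _ ≤ ε/2 + ε/2 := add_le_add (htail' k) (hhead' k)
      _ = ε := by ring
  have hblo : ∀ k, (1:ℝ)/2 - ε ≤ ‖b k‖ := by
    intro k
    have h1 := norm_sub_norm_le (y (n k)) (b k)
    have h2 := hy2 (n k)
    linarith [hberr k]
  have hbpos : ∀ k, 0 < ‖b k‖ := fun k => by
    have := hblo k; linarith
  have hbhi : ∀ k, ‖b k‖ ≤ 1 + ε := by
    intro k
    have h1 := norm_sub_norm_le (b k) (y (n k))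
    rw [norm_sub_rev] at h1
    linarith [hberr k, hy1 (n k)]
  set w : ℕ → X := fun k => ‖b k‖⁻¹ • b k with hwdef
  have hKex : ∀ i : ℕ, ∃ k, i < Nc (k+1) :=
    fun i => ⟨i, lt_of_lt_of_le (Nat.lt_succ_self i) (hNmono.le_apply)⟩
  set K : ℕ → ℕ := fun i => Nat.find (hKex i) with hKdef
  have hK : ∀ k, ∀ i ∈ Finset.Ico (Nc k) (Nc (k+1)), K i = k := by
    intro k i hi
    rw [Finset.mem_Ico] at hi
    have h1 : K i ≤ k := Nat.find_min' (hKex i) hi.2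
    have h2 : ¬ K i < k := by
      intro hlt
      have h3 : i < Nc (K i + 1) := Nat.find_spec (hKex i)
      have h4 : Nc (K i + 1) ≤ Nc k := hNmono.monotone (by omega)
      omega
    omega
  set a : ℕ → ℝ := fun i => ‖b (K i)‖⁻¹ * coef e hb (y (n (K i))) i with hadef
  have hweq : ∀ k, w k = ∑ i ∈ Finset.Ico (Nc k) (Nc (k+1)), a i • e i := by
    intro k
    rw [hwdef]
    simp only
    rw [hbdef]
    simp only
    rw [Finset.smul_sum]
    apply Finset.sum_congr rfl
    intro i hi
    rw [hadef]
    simp only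
    rw [hK k i hi, smul_smul]
  have hblock : IsNormalizedBlockBasis e w := by
    refine ⟨fun k => Finset.Ico (Nc k) (Nc (k+1)), a, ?_, ?_, hweq, ?_⟩
    · intro k
      rw [Finset.nonempty_Ico]
      exact hNmono (Nat.lt_succ_self k)
    · intro k i hi i' hi'
      rw [Finset.mem_Ico] at hi hi'
      exact lt_of_lt_of_le hi.2 hi'.1
    · intro k
      rw [hwdef]
      simp only [norm_smul, norm_inv, norm_norm]
      exact inv_mul_cancel₀ (ne_of_gt (hbpos k))
  obtain ⟨j, hjmono, hj⟩ := hasym w hblock 2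
  set a2 : Fin 2 → ℝ := ![‖b (j 0)‖, -‖b (j 1)‖] with ha2
  obtain ⟨-, hup⟩ := hj a2
  have hsum : ∑ i, a2 i • w (j i) = b (j 0) - b (j 1) := by
    rw [Fin.sum_univ_two]
    have e0 : a2 0 = ‖b (j 0)‖ := rfl
    have e1 : a2 1 = -‖b (j 1)‖ := rfl
    rw [e0, e1, hwdef]
    simp only
    rw [smul_inv_smul₀ (ne_of_gt (hbpos (j 0))), neg_smul,
      smul_inv_smul₀ (ne_of_gt (hbpos (j 1)))]
    abel
  have hsup : (⨆ i, |a2 i|) ≤ 1 + ε := by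
    apply Real.iSup_le _ (by linarith)
    intro i
    fin_cases i
    · have : |a2 0| = ‖b (j 0)‖ := by
        rw [ha2]; simp [abs_of_nonneg (norm_nonneg _)]
      rw [ha2] at this ⊢
      simpa [this] using hbhi (j 0)
    · have : |a2 1| = ‖b (j 1)‖ := by
        rw [ha2]; simp
      rw [ha2] at this ⊢
      simpa [this] using hbhi (j 1)
  have h1 : ‖b (j 0) - b (j 1)‖ ≤ lam * (1 + ε) := by
    rw [← hsum]
    calc ‖∑ i, a2 i • w (j i)‖ ≤ lam * ⨆ i, |a2 i| := hup
      _ ≤ lam * (1 + ε) := mul_le_mul_of_nonneg_left hsup (by linarith)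
  have hne2 : n (j 0) ≠ n (j 1) := by
    have hj01 : j 0 < j 1 := hjmono (by norm_num)
    exact ne_of_lt (hnmono hj01)
  have h2 := hysep _ _ hne2
  have h3 : ‖y (n (j 0)) - y (n (j 1))‖ ≤ ‖b (j 0) - b (j 1)‖ + ε + ε := by
    have e0 := hberr (j 0)
    have e1 := hberr (j 1)
    have heq : y (n (j 0)) - y (n (j 1))
        = (y (n (j 0)) - b (j 0)) + (b (j 0) - b (j 1)) + (b (j 1) - y (n (j 1))) := by abel
    rw [heq]
    calc ‖_ + _ + _‖ ≤ ‖_ + _‖ + ‖b (j 1) - y (n (j 1))‖ := norm_add_le _ _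
      _ ≤ ‖y (n (j 0)) - b (j 0)‖ + ‖b (j 0) - b (j 1)‖ + ‖b (j 1) - y (n (j 1))‖ := by
          have := norm_add_le (y (n (j 0)) - b (j 0)) (b (j 0) - b (j 1))
          linarith
      _ ≤ ε + ‖b (j 0) - b (j 1)‖ + ε := by
          rw [norm_sub_rev (b (j 1))]
          linarith
      _ = ‖b (j 0) - b (j 1)‖ + ε + ε := by ring
  linarith

end GH


/-- The gliding-hump step in the proof of Theorem 4.2: if a Banach space `X` has a
`λ`-asymptotic `c₀` Schauder basis, then `γ₀(X) ≤ λ`. -/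
theorem gammaZero_le_of_asymptotic_c0 (X : Type*) [NormedAddCommGroup X]
    [NormedSpace ℝ X] [CompleteSpace X] (e : ℕ → X) (hbasis : IsSchauderBasis e)
    (lam : ℝ) (hasym : IsAsymptoticC0 e lam) :
    gammaZero X ≤ lam := by
  have hlam1 : 1 ≤ lam := GH.one_le_lam e hbasis hasym
  rw [gammaZero]
  apply Real.sSup_le _ (by linarith)
  rintro r ⟨hr0, x, hx1, hw, hsep⟩
  exact GH.key_estimate e hbasis hasym r x hx1 hw hsep
end
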